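/- Let Q be a special rectangle in ℝ^d. Suppose Q is the union of three pairwise disjoint measurable sets E₊, E₋, G with min{λ(E₊), λ(E₋)} > (√2 − 1)·λ(G). Then there exists a special rectangle W ⊆ Q such that min{λ(E₊ ∩ W), λ(E₋ ∩ W)} ≥ ((3 − 2√2)/2)·λ(W). In particular, (√2 − 1, (3 − 2√2)/2) is a John–Strömberg pair for the collection of all special rectangles in ℝ^d. -/

import Mathlib

open MeasureTheory Set

/-- A special rectangle ("false cube") in `ℝ^d`: a product of `d` bounded closed
intervals of positive length, each of whose lengths equals either the minimum
length `m` or twice the minimum length. -/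
def IsSpecialRectangle {d : ℕ} (Q : Set (Fin d → ℝ)) : Prop :=
  ∃ (a l : Fin d → ℝ) (m : ℝ), 0 < m ∧ (∀ i, l i = m ∨ l i = 2 * m) ∧ (∃ i, l i = m) ∧
    Q = Set.univ.pi fun i => Set.Icc (a i) (a i + l i)

/-- `(τ,s)` is a John–Strömberg pair for the collection `𝓔`. -/
def IsJSPair {X : Type*} [MeasurableSpace X] (μ : Measure X)
    (𝓔 : Set (Set X)) (τ s : ℝ) : Prop :=
  0 < τ ∧ 0 < s ∧
  ∀ Q ∈ 𝓔, ∀ Ep Em G : Set X,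
    MeasurableSet Ep → MeasurableSet Em → MeasurableSet G →
    Disjoint Ep Em → Disjoint Ep G → Disjoint Em G →
    Q = Ep ∪ Em ∪ G →
    ENNReal.ofReal τ * μ G < min (μ Ep) (μ Em) →
    ∃ W ∈ 𝓔, W ⊆ Q ∧ ENNReal.ofReal s * μ W ≤ min (μ (W ∩ Ep)) (μ (W ∩ Em))

namespace JSAux

noncomputable section
open Filter Metric
open scoped ENNReal Classical

variable {d : ℕ}

/-- side-length predicate for special rectangles -/
def SpecialSides (l : Fin d → ℝ) : Prop :=
  ∃ m : ℝ, 0 < m ∧ (∀ i, l i = m ∨ l i = 2 * m) ∧ ∃ i, l i = m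

abbrev Pt (d : ℕ) := Fin d → ℝ

def ico (p : Pt d × Pt d) : Set (Pt d) :=
  Set.univ.pi fun i => Set.Ico (p.1 i) (p.1 i + p.2 i)

def icc (p : Pt d × Pt d) : Set (Pt d) :=
  Set.univ.pi fun i => Set.Icc (p.1 i) (p.1 i + p.2 i)

lemma sides_pos {l : Fin d → ℝ} (h : SpecialSides l) : ∀ i, 0 < l i := by
  obtain ⟨m, hm, hor, -⟩ := h
  intro i
  rcases hor i with h' | h' <;> rw [h'] <;> linarith

variable [NeZero d]

def splitIdx (l : Fin d → ℝ) : Fin d :=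
  (Finset.exists_max_image Finset.univ l
    ⟨⟨0, Nat.pos_of_ne_zero (NeZero.ne d)⟩, Finset.mem_univ _⟩).choose

lemma le_splitIdx (l : Fin d → ℝ) (j : Fin d) : l j ≤ l (splitIdx l) := by
  have := (Finset.exists_max_image Finset.univ l
    ⟨⟨0, Nat.pos_of_ne_zero (NeZero.ne d)⟩, Finset.mem_univ _⟩).choose_spec
  exact this.2 j (Finset.mem_univ j)

def child (b : Bool) (p : Pt d × Pt d) : Pt d × Pt d :=
  let i := splitIdx p.2
  (if b then Function.update p.1 i (p.1 i + p.2 i / 2) else p.1,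
    Function.update p.2 i (p.2 i / 2))

lemma specialSides_child {p : Pt d × Pt d} (h : SpecialSides p.2) (b : Bool) :
    SpecialSides (child b p).2 := by
  obtain ⟨m, hm, hor, i₁, hi₁⟩ := h
  set i := splitIdx p.2 with hidef
  show SpecialSides (Function.update p.2 i (p.2 i / 2))
  by_cases h2 : ∃ j, p.2 j = 2 * m
  · -- split side has length 2m, new side m
    obtain ⟨j, hj⟩ := h2
    have hilen : p.2 i = 2 * m := by
      rcases hor i with h' | h'
      · exfalso
        have := le_splitIdx p.2 j
        rw [hj, h'] at this; linarith
      · exact h'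
    refine ⟨m, hm, fun k => ?_, ⟨i, ?_⟩⟩
    · rcases eq_or_ne k i with rfl | hk
      · rw [Function.update_self, hilen]; left; linarith
      · rw [Function.update_of_ne hk]; exact hor k
    · rw [Function.update_self, hilen]; linarith
  · -- all sides equal m
    push_neg at h2
    have hall : ∀ k, p.2 k = m := by
      intro k; rcases hor k with h' | h'; · exact h'
      · exact absurd h' (h2 k)
    refine ⟨m / 2, by linarith, fun k => ?_, ⟨i, ?_⟩⟩
    · rcases eq_or_ne k i with rfl | hk
      · rw [Function.update_self, hall i]; left; rfl
      · rw [Function.update_of_ne hk, hall k]; right; ring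
    · rw [Function.update_self, hall i]

lemma mem_ico_iff {p : Pt d × Pt d} {x : Pt d} :
    x ∈ ico p ↔ ∀ i, p.1 i ≤ x i ∧ x i < p.1 i + p.2 i := by
  rw [ico, Set.mem_univ_pi]
  simp only [Set.mem_Ico]

lemma mem_icc_iff {p : Pt d × Pt d} {x : Pt d} :
    x ∈ icc p ↔ ∀ i, p.1 i ≤ x i ∧ x i ≤ p.1 i + p.2 i := by
  rw [icc, Set.mem_univ_pi]
  simp only [Set.mem_Icc]

lemma ico_subset_icc (p : Pt d × Pt d) : ico p ⊆ icc p := by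
  intro x hx
  rw [mem_ico_iff] at hx
  rw [mem_icc_iff]
  exact fun i => ⟨(hx i).1, (hx i).2.le⟩

lemma child_snd_apply (p : Pt d × Pt d) (b : Bool) (i : Fin d) :
    (child b p).2 i =
      if i = splitIdx p.2 then p.2 (splitIdx p.2) / 2 else p.2 i := by
  cases b <;> simp [child, Function.update_apply]

lemma child_fst_apply (p : Pt d × Pt d) (b : Bool) (i : Fin d) :
    (child b p).1 i =
      if b = true ∧ i = splitIdx p.2 then p.1 (splitIdx p.2) + p.2 (splitIdx p.2) / 2
      else p.1 i := by
  cases b <;> simp [child, Function.update_apply] <;>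
    rcases eq_or_ne i (splitIdx p.2) with rfl | hne <;> simp [hne]

lemma ico_child_subset {p : Pt d × Pt d} (h : SpecialSides p.2) (b : Bool) :
    ico (child b p) ⊆ ico p := by
  have hpos := sides_pos h
  intro x hx
  rw [mem_ico_iff] at hx ⊢
  intro i
  have hxi := hx i
  rw [child_fst_apply, child_snd_apply] at hxi
  rcases eq_or_ne i (splitIdx p.2) with heq | hne
  · subst heq
    have hp := hpos (splitIdx p.2)
    cases b <;> simp only [true_and, and_true, if_pos rfl, reduceCtorEq, if_true, if_false,
      Bool.false_eq_true, false_and, if_neg] at hxi <;> constructor <;> try linarith [hxi.1, hxi.2]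
  · rw [if_neg hne, if_neg (fun hc => hne hc.2)] at hxi
    exact hxi

lemma icc_child_subset {p : Pt d × Pt d} (h : SpecialSides p.2) (b : Bool) :
    icc (child b p) ⊆ icc p := by
  have hpos := sides_pos h
  intro x hx
  rw [mem_icc_iff] at hx ⊢
  intro i
  have hxi := hx i
  rw [child_fst_apply, child_snd_apply] at hxi
  rcases eq_or_ne i (splitIdx p.2) with heq | hne
  · subst heq
    have hp := hpos (splitIdx p.2)
    cases b <;> simp only [true_and, and_true, if_pos rfl, reduceCtorEq, if_true, if_false,
      Bool.false_eq_true, false_and, if_neg] at hxi <;> constructor <;> try linarith [hxi.1, hxi.2]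
  · rw [if_neg hne, if_neg (fun hc => hne hc.2)] at hxi
    exact hxi

lemma ico_child_union {p : Pt d × Pt d} (h : SpecialSides p.2) :
    ico p = ico (child false p) ∪ ico (child true p) := by
  have hpos := sides_pos h
  ext x
  constructor
  · intro hx
    rw [mem_ico_iff] at hx
    by_cases hxl : x (splitIdx p.2) < p.1 (splitIdx p.2) + p.2 (splitIdx p.2) / 2
    · left
      rw [mem_ico_iff]
      intro i
      rw [child_fst_apply, child_snd_apply]
      rcases eq_or_ne i (splitIdx p.2) with heq | hne
      · subst heq
        rw [if_pos rfl, if_neg (by simp)]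
        exact ⟨(hx (splitIdx p.2)).1, hxl⟩
      · rw [if_neg hne, if_neg (fun hc => hne hc.2)]
        exact hx i
    · right
      push_neg at hxl
      rw [mem_ico_iff]
      intro i
      rw [child_fst_apply, child_snd_apply]
      rcases eq_or_ne i (splitIdx p.2) with heq | hne
      · subst heq
        rw [if_pos rfl, if_pos ⟨rfl, rfl⟩]
        refine ⟨hxl, ?_⟩
        have := (hx (splitIdx p.2)).2; linarith
      · rw [if_neg hne, if_neg (fun hc => hne hc.2)]
        exact hx i
  · rintro (hx | hx)
    · exact ico_child_subset h false hx
    · exact ico_child_subset h true hx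

lemma ico_child_disjoint {p : Pt d × Pt d} :
    Disjoint (ico (child false p)) (ico (child true p)) := by
  rw [Set.disjoint_left]
  intro x hx hx'
  rw [mem_ico_iff] at hx hx'
  have h1 := (hx (splitIdx p.2)).2
  have h2 := (hx' (splitIdx p.2)).1
  rw [child_fst_apply, child_snd_apply, if_pos rfl, if_neg (by simp)] at h1
  rw [child_fst_apply, if_pos ⟨rfl, rfl⟩] at h2
  linarith

/-- real volume of the box -/
def vol (p : Pt d × Pt d) : ℝ := ∏ i, p.2 i

lemma vol_pos {p : Pt d × Pt d} (h : SpecialSides p.2) : 0 < vol p :=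
  Finset.prod_pos fun i _ => sides_pos h i

lemma volume_ico {p : Pt d × Pt d} (h : SpecialSides p.2) :
    volume (ico p) = ENNReal.ofReal (vol p) := by
  rw [ico, volume_pi_pi]
  rw [vol, ENNReal.ofReal_prod_of_nonneg (fun i _ => (sides_pos h i).le)]
  congr 1
  ext i
  rw [Real.volume_Ico, add_sub_cancel_left]

lemma volume_icc {p : Pt d × Pt d} (h : SpecialSides p.2) :
    volume (icc p) = ENNReal.ofReal (vol p) := by
  rw [icc, volume_pi_pi]
  rw [vol, ENNReal.ofReal_prod_of_nonneg (fun i _ => (sides_pos h i).le)]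
  congr 1
  ext i
  rw [Real.volume_Icc, add_sub_cancel_left]

lemma vol_child (p : Pt d × Pt d) (b : Bool) : vol (child b p) = vol p / 2 := by
  have h1 : vol (child b p) = ∏ i, Function.update p.2 (splitIdx p.2) (p.2 (splitIdx p.2) / 2) i := by
    cases b <;> rfl
  rw [h1, Finset.prod_update_of_mem (Finset.mem_univ _),
    vol, Finset.prod_eq_mul_prod_sdiff_singleton_of_mem (Finset.mem_univ (splitIdx p.2))]
  ring

def cell (p : Pt d × Pt d) : List Bool → Pt d × Pt d
  | [] => p
  | b :: w => cell (child b p) w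

@[simp] lemma cell_nil (p : Pt d × Pt d) : cell p [] = p := rfl

@[simp] lemma cell_cons (p : Pt d × Pt d) (b : Bool) (w : List Bool) :
    cell p (b :: w) = cell (child b p) w := rfl

lemma cell_append (p : Pt d × Pt d) (w₁ w₂ : List Bool) :
    cell p (w₁ ++ w₂) = cell (cell p w₁) w₂ := by
  induction w₁ generalizing p with
  | nil => rfl
  | cons b w ih => simp [ih]

lemma cell_concat (p : Pt d × Pt d) (w : List Bool) (b : Bool) :
    cell p (w ++ [b]) = child b (cell p w) := by
  rw [cell_append]; rfl

lemma specialSides_cell {p : Pt d × Pt d} (h : SpecialSides p.2) (w : List Bool) :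
    SpecialSides (cell p w).2 := by
  induction w generalizing p with
  | nil => exact h
  | cons b w ih => exact ih (specialSides_child h b)

lemma ico_cell_subset {p : Pt d × Pt d} (h : SpecialSides p.2) (w : List Bool) :
    ico (cell p w) ⊆ ico p := by
  induction w generalizing p with
  | nil => exact subset_rfl
  | cons b w ih =>
    exact (ih (specialSides_child h b)).trans (ico_child_subset h b)

lemma icc_cell_subset {p : Pt d × Pt d} (h : SpecialSides p.2) (w : List Bool) :
    icc (cell p w) ⊆ icc p := by
  induction w generalizing p with
  | nil => exact subset_rfl
  | cons b w ih =>
    exact (ih (specialSides_child h b)).trans (icc_child_subset h b)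

lemma vol_cell_concat (p : Pt d × Pt d) (w : List Bool) (b : Bool) :
    vol (cell p (w ++ [b])) = vol (cell p w) / 2 := by
  rw [cell_concat, vol_child]

lemma cell_disjoint {p : Pt d × Pt d} (h : SpecialSides p.2) :
    ∀ (w w' : List Bool), ¬ w <+: w' → ¬ w' <+: w →
      Disjoint (ico (cell p w)) (ico (cell p w')) := by
  intro w
  induction w generalizing p with
  | nil => intro w' h1 _; exact absurd (List.nil_prefix) h1
  | cons b t ih =>
    intro w' h1 h2
    match w' with
    | [] => exact absurd (List.nil_prefix) h2
    | b' :: t' =>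
      rcases eq_or_ne b b' with rfl | hbb
      · rw [List.cons_prefix_cons] at h1 h2
        simp only [true_and] at h1 h2
        exact ih (p := child b p) (specialSides_child h b) t' h1 h2
      · have hsub1 : ico (cell p (b :: t)) ⊆ ico (child b p) :=
          ico_cell_subset (specialSides_child h b) t
        have hsub2 : ico (cell p (b' :: t')) ⊆ ico (child b' p) :=
          ico_cell_subset (specialSides_child h b') t'
        have : Disjoint (ico (child b p)) (ico (child b' p)) := by
          cases b <;> cases b' <;> first
            | exact absurd rfl hbb
            | exact ico_child_disjoint
            | exact ico_child_disjoint.symm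
        exact Set.disjoint_of_subset hsub1 hsub2 this

def chain (p : Pt d × Pt d) (x : Pt d) : ℕ → List Bool
  | 0 => []
  | n + 1 =>
    chain p x n ++
      [if x ∈ ico (child false (cell p (chain p x n))) then false else true]

lemma chain_length (p : Pt d × Pt d) (x : Pt d) (n : ℕ) :
    (chain p x n).length = n := by
  induction n with
  | zero => rfl
  | succ n ih => simp [chain, ih]

lemma chain_mem {p : Pt d × Pt d} (h : SpecialSides p.2) {x : Pt d}
    (hx : x ∈ ico p) (n : ℕ) : x ∈ ico (cell p (chain p x n)) := by
  induction n with
  | zero => exact hx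
  | succ n ih =>
    rw [chain, cell_concat]
    by_cases hmem : x ∈ ico (child false (cell p (chain p x n)))
    · rw [if_pos hmem]; exact hmem
    · rw [if_neg hmem]
      have hs := specialSides_cell h (chain p x n)
      have := ico_child_union hs ▸ ih
      rcases this with h' | h'
      · exact absurd h' hmem
      · exact h'

lemma chain_prefix (p : Pt d × Pt d) (x : Pt d) {n n' : ℕ} (hnn : n ≤ n') :
    chain p x n <+: chain p x n' := by
  induction n' with
  | zero => rw [Nat.le_zero] at hnn; subst hnn; exact List.prefix_refl _
  | succ k ih =>
    rcases Nat.lt_or_ge n (k+1) with hlt | hge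
    · have := ih (Nat.lt_succ_iff.1 hlt)
      exact this.trans (by rw [chain]; exact List.prefix_append _ _)
    · have : n = k + 1 := le_antisymm hnn hge
      subst this; exact List.prefix_refl _

lemma prefix_chain_eq (p : Pt d × Pt d) (x : Pt d) {v : List Bool} {n : ℕ}
    (hv : v <+: chain p x n) : v = chain p x v.length := by
  have hlen : v.length ≤ n := by
    have := hv.length_le; rwa [chain_length] at this
  have h2 : chain p x v.length <+: chain p x n := chain_prefix p x hlen
  have e1 := List.prefix_iff_eq_take.1 hv
  have e2 := List.prefix_iff_eq_take.1 h2
  rw [chain_length] at e2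
  rw [e1, ← e2, chain_length]

lemma chain_vol (p : Pt d × Pt d) (x : Pt d) (n : ℕ) :
    vol (cell p (chain p x n)) = vol p / 2 ^ n := by
  induction n with
  | zero => simp [chain]
  | succ n ih => rw [chain, vol_cell_concat, ih, pow_succ]; ring

lemma measurableSet_ico (p : Pt d × Pt d) : MeasurableSet (ico p) :=
  MeasurableSet.univ_pi fun _ => measurableSet_Ico

lemma measurableSet_icc (p : Pt d × Pt d) : MeasurableSet (icc p) :=
  MeasurableSet.univ_pi fun _ => measurableSet_Icc

lemma isSpecialRectangle_icc {p : Pt d × Pt d} (h : SpecialSides p.2) :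
    IsSpecialRectangle (icc p) := by
  obtain ⟨m, hm, hor, hi⟩ := h
  exact ⟨p.1, p.2, m, hm, hor, hi, rfl⟩

lemma sqrt2_facts : Real.sqrt 2 ^ 2 = 2 ∧ 1.41 < Real.sqrt 2 ∧ Real.sqrt 2 < 1.42 := by
  have hsq : Real.sqrt 2 ^ 2 = 2 := Real.sq_sqrt (by norm_num)
  have h0 : 0 ≤ Real.sqrt 2 := Real.sqrt_nonneg 2
  refine ⟨hsq, ?_, ?_⟩ <;> nlinarith

lemma no_density_escape (p : Pt d × Pt d) (hp : SpecialSides p.2) {s : ℝ}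
    (hs0 : 0 < s) (hs1 : s < 1) (A : Set (Pt d)) (hA : MeasurableSet A)
    (hAsub : A ⊆ ico p)
    (hsmall : ∀ x ∈ A, ∀ n, volume (A ∩ ico (cell p (chain p x n))) <
      ENNReal.ofReal s * volume (ico (cell p (chain p x n)))) :
    volume A = 0 := by
  by_contra h0
  -- find a Lebesgue density point of `A` inside `A`
  have hae1 := Besicovitch.ae_tendsto_measure_inter_div (volume : Measure (Pt d)) A
  have hae2 := ae_restrict_mem (μ := (volume : Measure (Pt d))) hA
  have hne : (volume.restrict A) ≠ 0 := by
    rw [Ne, Measure.restrict_eq_zero]; exact h0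
  haveI : (MeasureTheory.ae (volume.restrict A)).NeBot := ae_neBot.2 hne
  obtain ⟨x, hxA, hxd⟩ := (hae2.and hae1).exists
  set ε : ℝ := (1 - s) / 4 ^ d with hεdef
  have h4d : (1:ℝ) ≤ 4 ^ d := one_le_pow₀ (by norm_num : (1:ℝ) ≤ 4)
  have hεpos : 0 < ε := div_pos (by linarith) (by positivity)
  have hε1 : ε ≤ 1 := by
    rw [hεdef, div_le_one (by positivity)]; linarith
  have hlt : (1 : ℝ≥0∞) - ENNReal.ofReal ε < 1 :=
    ENNReal.sub_lt_self (by simp) (by simp) (ENNReal.ofReal_pos.2 hεpos).ne'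
  have hev : ∀ᶠ r in nhdsWithin 0 (Set.Ioi (0:ℝ)),
      (1 - ENNReal.ofReal ε) <
        volume (A ∩ closedBall x r) / volume (closedBall x r) :=
    hxd (Ioi_mem_nhds hlt)
  rw [eventually_nhdsWithin_iff, Metric.eventually_nhds_iff] at hev
  obtain ⟨δ, hδpos, hδ⟩ := hev
  obtain ⟨n, hn⟩ : ∃ n : ℕ, vol p / (δ/2)^d < 2 ^ n :=
    pow_unbounded_of_one_lt _ (by norm_num : (1:ℝ) < 2)
  set c := cell p (chain p x n) with hc
  have hcs : SpecialSides c.2 := specialSides_cell hp _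
  obtain ⟨m, hm, hor, -⟩ := hcs
  have hcs' : SpecialSides c.2 := specialSides_cell hp _
  have hxc : x ∈ ico c := chain_mem hp (hAsub hxA) n
  have hvolc : vol c = vol p / 2 ^ n := chain_vol p x n
  have hsides_le : ∀ i, c.2 i ≤ 2 * m := fun i => by
    rcases hor i with h | h <;> rw [h] <;> linarith
  have hm_le : ∀ i, m ≤ c.2 i := fun i => by
    rcases hor i with h | h <;> rw [h] <;> linarith
  have hmd : m ^ d ≤ vol c := by
    have : (m:ℝ) ^ d = ∏ _i : Fin d, m := by
      rw [Finset.prod_const, Finset.card_univ, Fintype.card_fin]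
    rw [this, vol]
    exact Finset.prod_le_prod (fun _ _ => hm.le) (fun i _ => hm_le i)
  have hvol_lt : vol c < (δ/2)^d := by
    rw [hvolc, div_lt_iff₀ (by positivity : (0:ℝ) < 2 ^ n)]
    rw [div_lt_iff₀ (by positivity : (0:ℝ) < (δ/2)^d)] at hn
    linarith [hn]
  have hmδ : 2 * m < δ := by
    by_contra hcon
    push_neg at hcon
    have : (δ/2)^d ≤ m^d := pow_le_pow_left₀ (by positivity) (by linarith) d
    linarith
  set r := 2 * m with hrdef
  have hr : 0 < r := by positivity
  set B := closedBall x r with hB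
  have hCB : ico c ⊆ B := by
    intro y hy
    rw [hB, mem_closedBall, dist_pi_le_iff hr.le]
    intro i
    rw [Real.dist_eq, abs_le]
    have h1 := (mem_ico_iff.1 hy) i
    have h2 := (mem_ico_iff.1 hxc) i
    have h3 := hsides_le i
    constructor <;> [linarith [h1.1, h2.2]; linarith [h1.2, h2.1]]
  have hBvol : volume B = ENNReal.ofReal ((2*r)^d) := by
    rw [hB, closedBall_pi x hr.le, volume_pi_pi]
    have : ∀ i : Fin d, volume (closedBall (x i) r) = ENNReal.ofReal (2*r) := by
      intro i
      rw [Real.closedBall_eq_Icc, Real.volume_Icc]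
      congr 1; ring
    simp only [this]
    rw [Finset.prod_const, Finset.card_univ, Fintype.card_fin,
      ← ENNReal.ofReal_pow (by positivity)]
  have hBne : volume B ≠ 0 := by
    rw [hBvol]
    exact (ENNReal.ofReal_pos.2 (by positivity)).ne'
  have hBfin : volume B ≠ ⊤ := by rw [hBvol]; exact ENNReal.ofReal_ne_top
  have hratio := hδ (y := r)
    (by rw [Real.dist_eq, sub_zero, abs_of_pos hr]; exact hmδ) (Set.mem_Ioi.2 hr)
  have hAB : (1 - ENNReal.ofReal ε) * volume B ≤ volume (A ∩ B) := by
    have h' := le_of_lt hratio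
    rwa [ENNReal.le_div_iff_mul_le (Or.inl hBne) (Or.inl hBfin)] at h'
  have hdiffB : volume (B \ A) ≤ ENNReal.ofReal ε * volume B := by
    have hsum : volume (B ∩ A) + volume (B \ A) = volume B :=
      measure_inter_add_diff B hA
    have h1' : (1 - ENNReal.ofReal ε) * volume B + volume (B \ A) ≤ volume B := by
      conv_rhs => rw [← hsum]
      rw [Set.inter_comm]
      exact add_le_add_left hAB _
    have hback : volume B = (1 - ENNReal.ofReal ε) * volume B
        + ENNReal.ofReal ε * volume B := by
      rw [← add_mul, tsub_add_cancel_of_le (ENNReal.ofReal_le_one.2 hε1), one_mul]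
    nth_rewrite 2 [hback] at h1'
    exact (ENNReal.add_le_add_iff_left
      (ENNReal.mul_ne_top (ne_top_of_le_ne_top ENNReal.one_ne_top tsub_le_self) hBfin)).1 h1'
  have hvic : volume (ico c) = ENNReal.ofReal (vol c) := volume_ico hcs'
  have hb1 : volume (ico c ∩ A) < ENNReal.ofReal s * volume (ico c) := by
    rw [Set.inter_comm]
    exact hsmall x hxA n
  have hb2 : volume (ico c \ A) ≤ ENNReal.ofReal (1 - s) * volume (ico c) := by
    calc volume (ico c \ A) ≤ volume (B \ A) :=
          measure_mono (Set.diff_subset_diff_left hCB)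
      _ ≤ ENNReal.ofReal ε * volume B := hdiffB
      _ = ENNReal.ofReal (ε * (2*r)^d) := by
          rw [hBvol, ← ENNReal.ofReal_mul hεpos.le]
      _ = ENNReal.ofReal ((1-s) * m^d) := by
          congr 1
          rw [hεdef, hrdef]
          have h4 : (2 * (2 * m))^d = 4^d * m^d := by
            rw [← mul_pow]; ring_nf
          rw [h4]
          field_simp
      _ ≤ ENNReal.ofReal (1-s) * volume (ico c) := by
          rw [ENNReal.ofReal_mul (by linarith), hvic]
          exact mul_le_mul_right (ENNReal.ofReal_le_ofReal hmd) _
  have hfin : volume (ico c) = volume (ico c ∩ A) + volume (ico c \ A) :=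
    (measure_inter_add_diff _ hA).symm
  have hfin2 : volume (ico c \ A) ≠ ⊤ :=
    (lt_of_le_of_lt (measure_mono Set.diff_subset)
      (by rw [hvic]; exact ENNReal.ofReal_lt_top)).ne
  have hlt' : volume (ico c) < ENNReal.ofReal s * volume (ico c)
      + ENNReal.ofReal (1-s) * volume (ico c) :=
    calc volume (ico c) = volume (ico c ∩ A) + volume (ico c \ A) := hfin
      _ < ENNReal.ofReal s * volume (ico c) + ENNReal.ofReal (1-s) * volume (ico c) :=
        ENNReal.add_lt_add_of_lt_of_le hfin2 hb1 hb2
  rw [← add_mul, ← ENNReal.ofReal_add hs0.le (by linarith)] at hlt'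
  have : s + (1 - s) = 1 := by ring
  rw [this, ENNReal.ofReal_one, one_mul] at hlt'
  exact lt_irrefl _ hlt'

theorem core (a l : Fin d → ℝ) (hl : SpecialSides l)
    (E₁ E₂ G : Set (Pt d)) (hE₁ : MeasurableSet E₁) (hE₂ : MeasurableSet E₂)
    (hG : MeasurableSet G) (hu : icc (a, l) = E₁ ∪ E₂ ∪ G)
    (h1 : ENNReal.ofReal (Real.sqrt 2 - 1) * volume G < volume E₁)
    (h2 : ENNReal.ofReal (Real.sqrt 2 - 1) * volume G < volume E₂)
    (h12 : volume E₁ ≤ volume E₂) :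
    ∃ W, IsSpecialRectangle W ∧ W ⊆ icc (a, l) ∧
      ENNReal.ofReal ((3 - 2*Real.sqrt 2)/2) * volume W ≤ volume (E₁ ∩ W) ∧
      ENNReal.ofReal ((3 - 2*Real.sqrt 2)/2) * volume W ≤ volume (E₂ ∩ W) := by
  obtain ⟨hsq, hs2a, hs2b⟩ := sqrt2_facts
  set s : ℝ := (3 - 2*Real.sqrt 2)/2 with hsdef
  set τ : ℝ := Real.sqrt 2 - 1 with hτdef
  have hs0 : 0 < s := by rw [hsdef]; nlinarith
  have hs1 : s < 1 := by rw [hsdef]; nlinarith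
  have h3s : 3 * s < 1 := by rw [hsdef]; nlinarith
  have hτ0 : 0 < τ := by rw [hτdef]; nlinarith
  have hkey : 2 * s < τ * (1 - 3*s) := by rw [hsdef, hτdef]; nlinarith
  set p : Pt d × Pt d := (a, l) with hpdef
  have hlp : SpecialSides p.2 := hl
  have hQvol : volume (icc p) = ENNReal.ofReal (vol p) := volume_icc hlp
  have hQ'vol : volume (ico p) = ENNReal.ofReal (vol p) := volume_ico hlp
  have hE₁Q : E₁ ⊆ icc p := by
    rw [show icc p = icc (a, l) from rfl, hu]
    exact subset_union_left.trans subset_union_left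
  have hE₂Q : E₂ ⊆ icc p := by
    rw [show icc p = icc (a, l) from rfl, hu]
    exact subset_union_right.trans subset_union_left
  have hGQ : G ⊆ icc p := by
    rw [show icc p = icc (a, l) from rfl, hu]
    exact subset_union_right
  by_cases hcase : ENNReal.ofReal s * volume (icc p) ≤ volume E₁
  · refine ⟨icc p, isSpecialRectangle_icc hlp, subset_rfl, ?_, ?_⟩
    · rwa [Set.inter_eq_self_of_subset_left hE₁Q]
    · rw [Set.inter_eq_self_of_subset_left hE₂Q]
      exact hcase.trans h12
  push_neg at hcase
  by_contra hcon
  push_neg at hcon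
  set C : List Bool → Set (Pt d) := fun w => ico (cell p w) with hC
  have hCmeas : ∀ w, MeasurableSet (C w) := fun w => measurableSet_ico _
  have hCvol : ∀ w, volume (C w) = ENNReal.ofReal (vol (cell p w)) :=
    fun w => volume_ico (specialSides_cell hlp w)
  have hCfin : ∀ w, volume (C w) ≠ ⊤ := fun w => by
    rw [hCvol]; exact ENNReal.ofReal_ne_top
  set P : List Bool → Prop :=
    fun w => ENNReal.ofReal s * volume (C w) ≤ volume (E₁ ∩ C w) with hP
  set S : Set (List Bool) := {w | P w ∧ ∀ v, v <+: w → v ≠ w → ¬ P v} with hS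
  have hProot : ¬ P [] := by
    intro hcontra
    have hcontra' : ENNReal.ofReal s * volume (C []) ≤ volume (E₁ ∩ C []) := hcontra
    have hmono : volume (E₁ ∩ C []) ≤ volume E₁ := measure_mono Set.inter_subset_left
    have hCr : volume (C []) = volume (icc p) := by
      rw [hCvol]; rw [hQvol]; rfl
    rw [hCr] at hcontra'
    exact absurd (hcontra'.trans hmono) (not_le.2 hcase)
  -- per-cell inequality on stopped cells
  have hstop : ∀ w ∈ S, ENNReal.ofReal (1 - 3*s) * volume (E₁ ∩ C w) ≤
      ENNReal.ofReal (2*s) * volume (G ∩ C w) := by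
    intro w hw
    obtain ⟨hPw, hmin⟩ := hw
    rcases List.eq_nil_or_concat' w with rfl | ⟨w', b, rfl⟩
    · exact absurd hPw hProot
    have hne : w' ≠ w' ++ [b] := by
      intro h
      have := congrArg List.length h
      simp at this
    have hpar : ¬ P w' := hmin w' (List.prefix_append _ _) hne
    have hvol2 : volume (C (w' ++ [b])) + volume (C (w' ++ [b])) = volume (C w') := by
      have hnn : (0:ℝ) ≤ vol (cell p w') / 2 :=
        div_nonneg (vol_pos (specialSides_cell hlp w')).le (by norm_num)
      rw [hCvol, hCvol, vol_cell_concat, ← ENNReal.ofReal_add hnn hnn]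
      · congr 1; ring
    have hsubp : C (w' ++ [b]) ⊆ C w' := by
      show ico (cell p (w' ++ [b])) ⊆ ico (cell p w')
      rw [cell_concat]
      exact ico_child_subset (specialSides_cell hlp w') b
    have hE1w : volume (E₁ ∩ C (w'++[b])) ≤
        ENNReal.ofReal (2*s) * volume (C (w'++[b])) := by
      have h' : volume (E₁ ∩ C (w'++[b])) ≤ volume (E₁ ∩ C w') :=
        measure_mono (Set.inter_subset_inter_right _ hsubp)
      have h'' : volume (E₁ ∩ C w') ≤ ENNReal.ofReal s * volume (C w') :=
        (not_le.1 hpar).le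
      have heq : ENNReal.ofReal (2*s) * volume (C (w'++[b])) =
          ENNReal.ofReal s * volume (C w') := by
        rw [← hvol2, ENNReal.ofReal_mul (by norm_num : (0:ℝ) ≤ 2)]
        rw [show ENNReal.ofReal (2:ℝ) = 2 by norm_num]
        ring
      rw [heq]
      exact h'.trans h''
    have hq : SpecialSides (cell p (w'++[b])).2 := specialSides_cell hlp _
    have hiccvol : volume (icc (cell p (w'++[b]))) = volume (C (w'++[b])) := by
      rw [volume_icc hq, hCvol]
    have hE2w : volume (E₂ ∩ C (w'++[b])) <
        ENNReal.ofReal s * volume (C (w'++[b])) := by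
      have hWsub : icc (cell p (w'++[b])) ⊆ icc (a, l) := icc_cell_subset hlp _
      have hfirst : ENNReal.ofReal s * volume (icc (cell p (w'++[b]))) ≤
          volume (E₁ ∩ icc (cell p (w'++[b]))) := by
        rw [hiccvol]
        exact hPw.trans (measure_mono
          (Set.inter_subset_inter_right _ (ico_subset_icc _)))
      have hsecond := hcon (icc (cell p (w'++[b])))
        (isSpecialRectangle_icc hq) hWsub hfirst
      calc volume (E₂ ∩ C (w'++[b]))
          ≤ volume (E₂ ∩ icc (cell p (w'++[b]))) :=
            measure_mono (Set.inter_subset_inter_right _ (ico_subset_icc _))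
        _ < ENNReal.ofReal s * volume (icc (cell p (w'++[b]))) := hsecond
        _ = ENNReal.ofReal s * volume (C (w'++[b])) := by rw [hiccvol]
    have hGw : ENNReal.ofReal (1 - 3*s) * volume (C (w'++[b])) ≤
        volume (G ∩ C (w'++[b])) := by
      have hCsub : C (w'++[b]) ⊆ E₁ ∪ E₂ ∪ G := by
        rw [← hu]
        exact (ico_cell_subset hlp _).trans (ico_subset_icc p)
      have hsplit : volume (C (w'++[b])) ≤ volume (E₁ ∩ C (w'++[b])) +
          volume (E₂ ∩ C (w'++[b])) + volume (G ∩ C (w'++[b])) := by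
        have hsub2 : C (w'++[b]) ⊆ (E₁ ∩ C (w'++[b])) ∪ (E₂ ∩ C (w'++[b]))
            ∪ (G ∩ C (w'++[b])) := by
          intro y hy
          rcases hCsub hy with (h' | h') | h'
          · exact Or.inl (Or.inl ⟨h', hy⟩)
          · exact Or.inl (Or.inr ⟨h', hy⟩)
          · exact Or.inr ⟨h', hy⟩
        calc volume (C (w'++[b])) ≤ volume ((E₁ ∩ C (w'++[b])) ∪ (E₂ ∩ C (w'++[b]))
              ∪ (G ∩ C (w'++[b]))) := measure_mono hsub2
          _ ≤ _ := le_trans (measure_union_le _ _)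
              (add_le_add_left (measure_union_le _ _) _)
      have hb : volume (E₁ ∩ C (w'++[b])) + volume (E₂ ∩ C (w'++[b])) ≤
          ENNReal.ofReal (3*s) * volume (C (w'++[b])) := by
        calc volume (E₁ ∩ C (w'++[b])) + volume (E₂ ∩ C (w'++[b]))
            ≤ ENNReal.ofReal (2*s) * volume (C (w'++[b])) +
              ENNReal.ofReal s * volume (C (w'++[b])) := add_le_add hE1w hE2w.le
          _ = ENNReal.ofReal (3*s) * volume (C (w'++[b])) := by
              rw [← add_mul, ← ENNReal.ofReal_add (by linarith) hs0.le]
              congr 2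
              ring
      have hV : volume (C (w'++[b])) ≤ ENNReal.ofReal (3*s) * volume (C (w'++[b]))
          + volume (G ∩ C (w'++[b])) :=
        hsplit.trans (add_le_add_left hb _)
      have hVeq : volume (C (w'++[b])) = ENNReal.ofReal (3*s) * volume (C (w'++[b]))
          + ENNReal.ofReal (1-3*s) * volume (C (w'++[b])) := by
        rw [← add_mul, ← ENNReal.ofReal_add (by linarith) (by linarith),
          show 3*s + (1-3*s) = 1 by ring, ENNReal.ofReal_one, one_mul]
      conv at hV => lhs; rw [hVeq]
      exact (ENNReal.add_le_add_iff_left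
        (ENNReal.mul_ne_top ENNReal.ofReal_ne_top (hCfin _))).1 hV
    calc ENNReal.ofReal (1-3*s) * volume (E₁ ∩ C (w'++[b]))
        ≤ ENNReal.ofReal (1-3*s) * (ENNReal.ofReal (2*s) * volume (C (w'++[b]))) :=
          mul_le_mul_right hE1w _
      _ = ENNReal.ofReal (2*s) * (ENNReal.ofReal (1-3*s) * volume (C (w'++[b]))) := by
          ring
      _ ≤ ENNReal.ofReal (2*s) * volume (G ∩ C (w'++[b])) := mul_le_mul_right hGw _
  -- the stopped cells cover almost all of E₁
  set U : Set (Pt d) := ⋃ w ∈ S, C w with hU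
  have hUmeas : MeasurableSet U :=
    MeasurableSet.biUnion S.to_countable (fun w _ => hCmeas w)
  set A : Set (Pt d) := (E₁ ∩ ico p) \ U with hA
  have hAmeas : MeasurableSet A := (hE₁.inter (measurableSet_ico p)).diff hUmeas
  have hAzero : volume A = 0 := by
    apply no_density_escape p hlp hs0 hs1 A hAmeas
      (fun y hy => hy.1.2)
    intro x hx n
    have hnP : ¬ P (chain p x n) := by
      intro hPn
      have hex : ∃ k, P (chain p x k) := ⟨n, hPn⟩
      have hPk := Nat.find_spec hex
      have hstopk : chain p x (Nat.find hex) ∈ S := by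
        refine ⟨hPk, ?_⟩
        intro v hv hvne hPv
        have hvchain : v = chain p x v.length := prefix_chain_eq p x hv
        have hltk : v.length < Nat.find hex := by
          have hle : v.length ≤ Nat.find hex := by
            have := hv.length_le
            rwa [chain_length] at this
          rcases lt_or_eq_of_le hle with h' | h'
          · exact h'
          · exact absurd (by rw [hvchain, h']) hvne
        exact Nat.find_min hex hltk (hvchain ▸ hPv)
      exact hx.2 (Set.mem_biUnion hstopk (chain_mem hlp hx.1.2 (Nat.find hex)))
    have hle : volume (A ∩ C (chain p x n)) ≤ volume (E₁ ∩ C (chain p x n)) :=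
      measure_mono (Set.inter_subset_inter_left _ (fun y hy => hy.1.1))
    exact lt_of_le_of_lt hle (not_le.1 hnP)
  have hQdiff : volume (icc p \ ico p) = 0 := by
    rw [measure_diff (ico_subset_icc p) (measurableSet_ico p).nullMeasurableSet
      (by rw [hQ'vol]; exact ENNReal.ofReal_ne_top), hQvol, hQ'vol, tsub_self]
  have hE₁split : volume E₁ ≤ ∑' (w : S), volume (E₁ ∩ C w) := by
    have h1' : E₁ ⊆ (((E₁ ∩ ico p) ∩ U) ∪ A) ∪ (icc p \ ico p) := by
      intro y hy
      by_cases hyq : y ∈ ico p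
      · by_cases hyu : y ∈ U
        · exact Or.inl (Or.inl ⟨⟨hy, hyq⟩, hyu⟩)
        · exact Or.inl (Or.inr ⟨⟨hy, hyq⟩, hyu⟩)
      · exact Or.inr ⟨hE₁Q hy, hyq⟩
    calc volume E₁ ≤ volume ((((E₁ ∩ ico p) ∩ U) ∪ A) ∪ (icc p \ ico p)) :=
          measure_mono h1'
      _ ≤ volume ((E₁ ∩ ico p) ∩ U) + volume A + volume (icc p \ ico p) :=
          le_trans (measure_union_le _ _) (add_le_add_left (measure_union_le _ _) _)
      _ = volume ((E₁ ∩ ico p) ∩ U) := by rw [hAzero, hQdiff, add_zero, add_zero]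
      _ ≤ volume (⋃ w ∈ S, (E₁ ∩ C w)) := measure_mono (by
          intro y hy
          obtain ⟨⟨hyE, -⟩, hyU⟩ := hy
          rw [Set.mem_iUnion₂] at hyU
          obtain ⟨w, hw, hyw⟩ := hyU
          exact Set.mem_biUnion hw ⟨hyE, hyw⟩)
      _ ≤ ∑' (w : S), volume (E₁ ∩ C w) := measure_biUnion_le _ S.to_countable _
  have hGsum : ∑' (w : S), volume (G ∩ C w) ≤ volume G := by
    have hpd : S.PairwiseDisjoint (fun w => G ∩ C w) := by
      intro w hw w' hw' hne
      have hnp1 : ¬ w <+: w' := fun hp' => (hw'.2 w hp' hne) hw.1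
      have hnp2 : ¬ w' <+: w := fun hp' => (hw.2 w' hp' (Ne.symm hne)) hw'.1
      exact Disjoint.mono Set.inter_subset_right Set.inter_subset_right
        (cell_disjoint hlp w w' hnp1 hnp2)
    rw [← measure_biUnion S.to_countable hpd (fun w _ => hG.inter (hCmeas w))]
    exact measure_mono (Set.iUnion₂_subset fun w _ => Set.inter_subset_left)
  have hsum : ENNReal.ofReal (1-3*s) * volume E₁ ≤
      ENNReal.ofReal (2*s) * volume G := by
    calc ENNReal.ofReal (1-3*s) * volume E₁
        ≤ ENNReal.ofReal (1-3*s) * ∑' (w : S), volume (E₁ ∩ C w) :=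
          mul_le_mul_right hE₁split _
      _ = ∑' (w : S), ENNReal.ofReal (1-3*s) * volume (E₁ ∩ C w) :=
          ENNReal.tsum_mul_left.symm
      _ ≤ ∑' (w : S), ENNReal.ofReal (2*s) * volume (G ∩ C w) :=
          ENNReal.tsum_le_tsum (fun w => hstop w w.2)
      _ = ENNReal.ofReal (2*s) * ∑' (w : S), volume (G ∩ C w) :=
          ENNReal.tsum_mul_left
      _ ≤ ENNReal.ofReal (2*s) * volume G := mul_le_mul_right hGsum _
  have hE₁pos : 0 < volume E₁ := lt_of_le_of_lt zero_le h1
  have h13ne : ENNReal.ofReal (1-3*s) ≠ 0 := by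
    rw [Ne, ENNReal.ofReal_eq_zero, not_le]
    linarith
  rcases eq_or_ne (volume G) 0 with hG0 | hG0
  · rw [hG0, mul_zero] at hsum
    have hx0 : ENNReal.ofReal (1-3*s) * volume E₁ = 0 := le_zero_iff.1 hsum
    rcases mul_eq_zero.1 hx0 with h' | h'
    · exact absurd h' h13ne
    · exact absurd h' hE₁pos.ne'
  · have hGfin : volume G ≠ ⊤ :=
      (lt_of_le_of_lt (measure_mono hGQ)
        (by rw [hQvol]; exact ENNReal.ofReal_lt_top)).ne
    have hstep : ENNReal.ofReal (τ * (1-3*s)) * volume G <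
        ENNReal.ofReal (2*s) * volume G := by
      calc ENNReal.ofReal (τ * (1-3*s)) * volume G
          = ENNReal.ofReal (1-3*s) * (ENNReal.ofReal τ * volume G) := by
            rw [← mul_assoc, ← ENNReal.ofReal_mul (by linarith)]
            congr 2
            ring
        _ < ENNReal.ofReal (1-3*s) * volume E₁ :=
            (ENNReal.mul_lt_mul_iff_right h13ne ENNReal.ofReal_ne_top).2 h1
        _ ≤ ENNReal.ofReal (2*s) * volume G := hsum
    have hge : ENNReal.ofReal (2*s) * volume G ≤
        ENNReal.ofReal (τ*(1-3*s)) * volume G :=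
      mul_le_mul_left (ENNReal.ofReal_le_ofReal hkey.le) _
    exact absurd hstep (not_lt.2 hge)

end

theorem main {d : ℕ} (Q Ep Em G : Set (Fin d → ℝ)) (hQ : IsSpecialRectangle Q)
    (hEp : MeasurableSet Ep) (hEm : MeasurableSet Em) (hG : MeasurableSet G)
    (hu : Q = Ep ∪ Em ∪ G)
    (hmin : ENNReal.ofReal (Real.sqrt 2 - 1) * volume G < min (volume Ep) (volume Em)) :
    ∃ W, IsSpecialRectangle W ∧ W ⊆ Q ∧
      ENNReal.ofReal ((3 - 2*Real.sqrt 2)/2) * volume W ≤ volume (Ep ∩ W) ∧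
      ENNReal.ofReal ((3 - 2*Real.sqrt 2)/2) * volume W ≤ volume (Em ∩ W) := by
  obtain ⟨a, l, m, hm, hor, hex, hQeq⟩ := hQ
  haveI : NeZero d := ⟨fun h => by subst h; exact hex.choose.elim0⟩
  have hl : SpecialSides l := ⟨m, hm, hor, hex⟩
  rw [lt_min_iff] at hmin
  have huicc : (icc (a, l) : Set (Fin d → ℝ)) = Ep ∪ Em ∪ G := hQeq.symm.trans hu
  rcases le_total (volume Ep) (volume Em) with h | h
  · obtain ⟨W, h1, h2, h3, h4⟩ :=
      core a l hl Ep Em G hEp hEm hG huicc hmin.1 hmin.2 h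
    exact ⟨W, h1, by rw [hQeq]; exact h2, h3, h4⟩
  · have huicc' : (icc (a, l) : Set (Fin d → ℝ)) = Em ∪ Ep ∪ G := by
      rw [huicc, Set.union_comm Ep Em]
    obtain ⟨W, h1, h2, h3, h4⟩ :=
      core a l hl Em Ep G hEm hEp hG huicc' hmin.2 hmin.1 h
    exact ⟨W, h1, by rw [hQeq]; exact h2, h4, h3⟩

end JSAux

theorem stmt3 {d : ℕ}
    (Q Ep Em G : Set (Fin d → ℝ)) (hQ : IsSpecialRectangle Q)
    (hEp : MeasurableSet Ep) (hEm : MeasurableSet Em) (hG : MeasurableSet G)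
    (h1 : Disjoint Ep Em) (h2 : Disjoint Ep G) (h3 : Disjoint Em G)
    (hu : Q = Ep ∪ Em ∪ G)
    (hmin : ENNReal.ofReal (Real.sqrt 2 - 1) * volume G < min (volume Ep) (volume Em)) :
    (∃ W : Set (Fin d → ℝ), IsSpecialRectangle W ∧ W ⊆ Q ∧
      ENNReal.ofReal ((3 - 2 * Real.sqrt 2) / 2) * volume W ≤
        min (volume (Ep ∩ W)) (volume (Em ∩ W))) ∧
    IsJSPair volume {C : Set (Fin d → ℝ) | IsSpecialRectangle C}
      (Real.sqrt 2 - 1) ((3 - 2 * Real.sqrt 2) / 2) := by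
  obtain ⟨hsq, hs2a, hs2b⟩ := JSAux.sqrt2_facts
  constructor
  · obtain ⟨W, hw1, hw2, hw3, hw4⟩ := JSAux.main Q Ep Em G hQ hEp hEm hG hu hmin
    exact ⟨W, hw1, hw2, le_min hw3 hw4⟩
  · refine ⟨by nlinarith, by nlinarith, ?_⟩
    intro Q' hQ' Ep' Em' G' m1 m2 m3 _ _ _ hu' hmin'
    obtain ⟨W, hw1, hw2, hw3, hw4⟩ := JSAux.main Q' Ep' Em' G' hQ' m1 m2 m3 hu' hmin'
    exact ⟨W, hw1, hw2, le_min (by rw [Set.inter_comm]; exact hw3)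
      (by rw [Set.inter_comm]; exact hw4)⟩
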